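/- Let G be an RLSLP of size g generating a string T, and let h be the height of the parse tree of G. Then there exists an h-bounded LZ-like encoding of T whose size is at most C·g for an absolute constant C. -/

import Mathlib

variable {α : Type*}

/-- The substring `T[i..i+ℓ)` (0-indexed). -/
def sub (T : List α) (i ℓ : ℕ) : List α := (T.drop i).take ℓ

/-- `p` is a period of `w`: `0 < p ≤ |w|` and `w[i] = w[i+p]` whenever both sides exist. -/
def IsPeriod (w : List α) (p : ℕ) : Prop :=
  0 < p ∧ p ≤ w.length ∧ ∀ i, i + p < w.length → w[i]? = w[i + p]?

/-- The minimum period of `w`. -/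
noncomputable def minPeriod (w : List α) : ℕ := sInf {p | IsPeriod w p}

/-- Starting position (0-indexed) of the `j`-th phrase (0-indexed) of a parsing,
the parsing being given as a list of (length, source) pairs. -/
def startOf (P : List (ℕ × ℕ)) (j : ℕ) : ℕ := ((P.take j).map Prod.fst).sum

/-- Length of the `j`-th phrase. -/
def lenOf (P : List (ℕ × ℕ)) (j : ℕ) : ℕ := (P[j]?.map Prod.fst).getD 0

/-- Source of the `j`-th phrase. -/
def srcOf (P : List (ℕ × ℕ)) (j : ℕ) : ℕ := (P[j]?.map Prod.snd).getD 0

/-- `P` is an LZ-like encoding of `T`: phrases have positive length, cover `T`,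
and every phrase of length at least 2 has a source strictly before its start with a
matching (possibly overlapping) previous occurrence. (Length-1 phrases are literal
symbols; the symbol is determined by `T`, so it need not be stored.) -/
def IsLZ (T : List α) (P : List (ℕ × ℕ)) : Prop :=
  (∀ q ∈ P, 1 ≤ q.1) ∧ (P.map Prod.fst).sum = T.length ∧
  ∀ j < P.length, 2 ≤ lenOf P j →
    srcOf P j < startOf P j ∧
    sub T (srcOf P j) (lenOf P j) = sub T (startOf P j) (lenOf P j)

/-- `H` is the height function of the LZ-like encoding `P`:
`H i = 0` on length-1 phrases, and otherwise
`H i = H (s_j + (i - b_j) % (b_j - s_j)) + 1` for position `i` of phrase `j`. -/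
def IsHeight (P : List (ℕ × ℕ)) (H : ℕ → ℕ) : Prop :=
  ∀ j < P.length, ∀ i, startOf P j ≤ i → i < startOf P j + lenOf P j →
    (lenOf P j = 1 → H i = 0) ∧
    (2 ≤ lenOf P j →
      H i = H (srcOf P j + (i - startOf P j) % (startOf P j - srcOf P j)) + 1)

/-- The LZ-like encoding `P` of `T` is `h`-bounded. -/
def HBounded (T : List α) (P : List (ℕ × ℕ)) (h : ℕ) : Prop :=
  ∃ H : ℕ → ℕ, IsHeight P H ∧ ∀ i < T.length, H i ≤ h

/-- `z^h(T)`: minimum size of an `h`-bounded LZ-like encoding of `T`. -/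
noncomputable def zh (T : List α) (h : ℕ) : ℕ :=
  sInf {k | ∃ P : List (ℕ × ℕ), IsLZ T P ∧ HBounded T P h ∧ P.length = k}

/-- `lpf_T(b)`: length of the longest previous factor at position `b` (0-indexed). -/
noncomputable def lpf (T : List α) (b : ℕ) : ℕ :=
  sSup {l | b + l ≤ T.length ∧ ∃ s < b, sub T s l = sub T b l}

/-- Number of phrases of the greedy LZ77 parsing of `T[b..)`;
`lzCount T 0 = z(T)` is the size of the greedy LZ77 parsing of `T`. -/
noncomputable def lzCount (T : List α) (b : ℕ) : ℕ :=
  if hb : b < T.length then lzCount T (b + max 1 (lpf T b)) + 1 else 0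
termination_by T.length - b
decreasing_by
  have h1 : 1 ≤ max 1 (lpf T b) := le_max_left _ _
  omega

/-- Starting positions of the phrases of the greedy LZ77 parsing of `T` (from `b`). -/
noncomputable def lzStarts (T : List α) (b : ℕ) : List ℕ :=
  if hb : b < T.length then b :: lzStarts T (b + max 1 (lpf T b)) else []
termination_by T.length - b
decreasing_by
  have h1 : 1 ≤ max 1 (lpf T b) := le_max_left _ _
  omega

/-- Right-hand side of a rule of a run-length straight-line program:
`A → a`, `A → BC`, or `A → B^t`. -/
inductive RLRhs (α : Type*) where
  | leaf : α → RLRhs α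
  | pair : ℕ → ℕ → RLRhs α
  | pow : ℕ → ℕ → RLRhs α

/-- A run-length straight-line program (RLSLP): variables are `0, …, m-1`
(the start variable being `m-1`), each with exactly one rule referencing
only smaller variables; run-length rules `A → B^t` require `t ≥ 2`.
Its size is its number `m` of rules. -/
structure RLSLP (α : Type*) where
  m : ℕ
  m_pos : 0 < m
  rule : ℕ → RLRhs α
  wf_pair : ∀ i b c, i < m → rule i = .pair b c → b < i ∧ c < i
  wf_pow : ∀ i b t, i < m → rule i = .pow b t → b < i ∧ 2 ≤ t

/-- The string derived from variable `i` of `G`. -/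
def RLSLP.expand (G : RLSLP α) (i : ℕ) : List α :=
  match G.rule i with
  | .leaf a => [a]
  | .pair b c => if _h : b < i ∧ c < i then G.expand b ++ G.expand c else []
  | .pow b t => if _h : b < i then (List.replicate t (G.expand b)).flatten else []
termination_by i
decreasing_by all_goals omega

/-- `G` generates the string `T`. -/
def RLSLP.Generates (G : RLSLP α) (T : List α) : Prop := G.expand (G.m - 1) = T

/-- Height of the parse (sub)tree of `G` rooted at variable `i`:
leaf rules `A → a` give leaves of the parse tree. -/
def RLSLP.varHeight (G : RLSLP α) (i : ℕ) : ℕ :=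
  match G.rule i with
  | .leaf _ => 0
  | .pair b c => if _h : b < i ∧ c < i then max (G.varHeight b) (G.varHeight c) + 1 else 0
  | .pow b _ => if _h : b < i then G.varHeight b + 1 else 0
termination_by i
decreasing_by all_goals omega

/-- Height of the parse tree of `G`. -/
def RLSLP.parseHeight (G : RLSLP α) : ℕ := G.varHeight (G.m - 1)

/-- `ĝ_rl(T)`: the size of the smallest RLSLP generating `T`. -/
noncomputable def grl (T : List α) : ℕ :=
  sInf {g | ∃ G : RLSLP α, G.Generates T ∧ G.m = g}

section Aux
variable {α : Type*}

/-! ### sub lemmas -/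

lemma sub_length (T : List α) (p l : ℕ) : (sub T p l).length = min l (T.length - p) := by
  simp [sub]

lemma sub_zero_full (T : List α) : sub T 0 T.length = T := by simp [sub]

lemma occ_le (T : List α) {p : ℕ} {w : List α} (hw : w ≠ []) (h : sub T p w.length = w) :
    p + w.length ≤ T.length := by
  have h1 := sub_length T p w.length
  rw [h] at h1
  have h2 := min_le_right w.length (T.length - p)
  rw [h1] at h2
  have h3 : 0 < w.length := List.length_pos_iff.mpr hw
  omega

lemma sub_take (T : List α) (p a l : ℕ) (hal : a ≤ l) :
    sub T p a = (sub T p l).take a := by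
  simp [sub, List.take_take, Nat.min_eq_left hal]

lemma sub_shift (T : List α) (p a l' l : ℕ) (h : a + l' ≤ l) :
    sub T (p + a) l' = ((sub T p l).drop a).take l' := by
  simp only [sub, List.drop_take, List.take_take, List.drop_drop]
  rw [Nat.min_eq_left (show l' ≤ l - a by omega)]

/-! ### startOf/lenOf lemmas -/

lemma startOf_zero (P : List (ℕ × ℕ)) : startOf P 0 = 0 := by simp [startOf]

lemma lenOf_append_left {P Q : List (ℕ × ℕ)} {j : ℕ} (h : j < P.length) :
    lenOf (P ++ Q) j = lenOf P j := by
  simp [lenOf, List.getElem?_append_left h]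

lemma srcOf_append_left {P Q : List (ℕ × ℕ)} {j : ℕ} (h : j < P.length) :
    srcOf (P ++ Q) j = srcOf P j := by
  simp [srcOf, List.getElem?_append_left h]

lemma startOf_append_left {P Q : List (ℕ × ℕ)} {j : ℕ} (h : j ≤ P.length) :
    startOf (P ++ Q) j = startOf P j := by
  simp [startOf, List.take_append_of_le_length h]

lemma startOf_length (P : List (ℕ × ℕ)) : startOf P P.length = (P.map Prod.fst).sum := by
  simp [startOf]

lemma startOf_of_le (P : List (ℕ × ℕ)) {j : ℕ} (h : P.length ≤ j) :
    startOf P j = (P.map Prod.fst).sum := by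
  simp [startOf, List.take_of_length_le h]

lemma startOf_succ (P : List (ℕ × ℕ)) {j : ℕ} (h : j < P.length) :
    startOf P (j + 1) = startOf P j + lenOf P j := by
  have hj : j < (P.map Prod.fst).length := by simpa using h
  rw [startOf, startOf, List.map_take, List.map_take, List.sum_take_succ _ _ hj]
  simp [lenOf, List.getElem?_eq_getElem h]

lemma startOf_mono (P : List (ℕ × ℕ)) : Monotone (startOf P) := by
  apply monotone_nat_of_le_succ
  intro j
  by_cases h : j < P.length
  · rw [startOf_succ P h]; omega
  · rw [startOf_of_le P (by omega), startOf_of_le P (by omega)]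

lemma lenOf_append_right (P : List (ℕ × ℕ)) (x : ℕ × ℕ) :
    lenOf (P ++ [x]) P.length = x.1 := by
  simp [lenOf]

lemma srcOf_append_right (P : List (ℕ × ℕ)) (x : ℕ × ℕ) :
    srcOf (P ++ [x]) P.length = x.2 := by
  simp [srcOf]

lemma lenOf_pos {P : List (ℕ × ℕ)} (hP : ∀ q ∈ P, 1 ≤ q.1) {j : ℕ} (h : j < P.length) :
    1 ≤ lenOf P j := by
  have : P[j] ∈ P := List.getElem_mem h
  have := hP _ this
  simp [lenOf, List.getElem?_eq_getElem h]
  omega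

end Aux

section Hfun
variable {α : Type*}

/-- Index of the phrase containing position `i`. -/
noncomputable def idxOf (P : List (ℕ × ℕ)) (i : ℕ) : ℕ := sInf {j | i < startOf P (j + 1)}

/-- The reference position used in the height recursion. -/
noncomputable def refOf (P : List (ℕ × ℕ)) (i : ℕ) : ℕ :=
  if lenOf P (idxOf P i) ≤ 1 then i
  else srcOf P (idxOf P i) + (i - startOf P (idxOf P i)) % (startOf P (idxOf P i) - srcOf P (idxOf P i))

/-- The canonical height function of a parsing. -/
noncomputable def hfun (P : List (ℕ × ℕ)) (i : ℕ) : ℕ :=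
  if h : refOf P i < i then hfun P (refOf P i) + 1 else 0
termination_by i
decreasing_by exact h

lemma idxOf_block {P : List (ℕ × ℕ)} {j k : ℕ} (hj : j < P.length) (hk : k < lenOf P j) :
    idxOf P (startOf P j + k) = j := by
  rw [idxOf]
  have hmem : j ∈ {j' | startOf P j + k < startOf P (j' + 1)} := by
    have := startOf_succ P hj
    simp only [Set.mem_setOf_eq, this]
    omega
  refine le_antisymm (Nat.sInf_le hmem) ?_
  by_contra hlt
  push_neg at hlt
  have hmem' := Nat.sInf_mem (⟨j, hmem⟩ : {j' | startOf P j + k < startOf P (j' + 1)}.Nonempty)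
  set j0 := sInf {j' | startOf P j + k < startOf P (j' + 1)} with hj0
  have h1 : startOf P (j0 + 1) ≤ startOf P j := startOf_mono P (by omega)
  simp only [Set.mem_setOf_eq] at hmem'
  omega

lemma refOf_block {P : List (ℕ × ℕ)} {j k : ℕ} (hj : j < P.length) (hk : k < lenOf P j) :
    refOf P (startOf P j + k) =
      if lenOf P j ≤ 1 then startOf P j + k
      else srcOf P j + k % (startOf P j - srcOf P j) := by
  rw [refOf, idxOf_block hj hk]
  simp

lemma hfun_block_one {P : List (ℕ × ℕ)} {j k : ℕ} (hj : j < P.length) (hk : k < lenOf P j)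
    (h1 : lenOf P j ≤ 1) : hfun P (startOf P j + k) = 0 := by
  rw [hfun, refOf_block hj hk, if_pos h1]
  simp

lemma hfun_block_step {P : List (ℕ × ℕ)} {j k : ℕ} (hj : j < P.length) (hk : k < lenOf P j)
    (h2 : 2 ≤ lenOf P j) (hsrc : srcOf P j < startOf P j) :
    hfun P (startOf P j + k) = hfun P (srcOf P j + k % (startOf P j - srcOf P j)) + 1 := by
  have hrlt : srcOf P j + k % (startOf P j - srcOf P j) < startOf P j + k := by
    have := Nat.mod_lt k (show 0 < startOf P j - srcOf P j by omega)
    omega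
  rw [hfun, refOf_block hj hk, if_neg (by omega)]
  rw [dif_pos hrlt]

/-- Every position below the total length lies in some block. -/
lemma exists_block {P : List (ℕ × ℕ)} (hP : ∀ q ∈ P, 1 ≤ q.1) {i : ℕ}
    (hi : i < (P.map Prod.fst).sum) :
    ∃ j, j < P.length ∧ ∃ k, k < lenOf P j ∧ i = startOf P j + k := by
  induction P using List.reverseRecOn with
  | nil => simp at hi
  | append_singleton R x ih =>
    by_cases hR : i < (R.map Prod.fst).sum
    · obtain ⟨j, hj, k, hk, hik⟩ := ih (fun q hq => hP q (by simp [hq])) hR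
      exact ⟨j, by simp; omega, k, by rwa [lenOf_append_left hj],
        by rwa [startOf_append_left (le_of_lt hj)]⟩
    · refine ⟨R.length, by simp, i - (R.map Prod.fst).sum, ?_, ?_⟩
      · rw [lenOf_append_right]
        simp at hi
        omega
      · rw [startOf_append_left (le_refl _), startOf_length]
        omega

/-- hfun only depends on the prefix of the parsing covering the position. -/
lemma hfun_prefix {Q P : List (ℕ × ℕ)} (hQ : ∀ q ∈ Q, 1 ≤ q.1)
    (hv : ∀ j < Q.length, 2 ≤ lenOf Q j → srcOf Q j < startOf Q j) :
    ∀ i, i < (Q.map Prod.fst).sum → hfun (Q ++ P) i = hfun Q i := by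
  intro i
  induction i using Nat.strong_induction_on with
  | _ i ih =>
    intro hi
    obtain ⟨j, hj, k, hk, rfl⟩ := exists_block hQ hi
    have hjle : j ≤ Q.length := le_of_lt hj
    have hstart : startOf (Q ++ P) j = startOf Q j := startOf_append_left hjle
    have hlen : lenOf (Q ++ P) j = lenOf Q j := lenOf_append_left hj
    have hsrc : srcOf (Q ++ P) j = srcOf Q j := srcOf_append_left hj
    have hjlen : j < (Q ++ P).length := by simp; omega
    by_cases h1 : lenOf Q j ≤ 1
    · have e1 : hfun (Q ++ P) (startOf Q j + k) = 0 := by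
        rw [← hstart]
        exact hfun_block_one hjlen (by omega) (by omega)
      rw [e1, hfun_block_one hj hk h1]
    · have hsrclt : srcOf Q j < startOf Q j := hv j hj (by omega)
      have e1 : hfun (Q ++ P) (startOf Q j + k)
          = hfun (Q ++ P) (srcOf Q j + k % (startOf Q j - srcOf Q j)) + 1 := by
        conv_lhs => rw [← hstart]
        rw [hfun_block_step hjlen (by omega) (by omega) (by omega)]
        rw [hsrc, hstart]
      have e2 : hfun Q (startOf Q j + k)
          = hfun Q (srcOf Q j + k % (startOf Q j - srcOf Q j)) + 1 :=
        hfun_block_step hj hk (by omega) hsrclt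
      have hlt : srcOf Q j + k % (startOf Q j - srcOf Q j) < startOf Q j + k := by
        have := Nat.mod_lt k (show 0 < startOf Q j - srcOf Q j by omega)
        omega
      rw [e1, e2, ih _ hlt (by omega)]

end Hfun

section GoodSec
variable {α : Type*}

/-- Partial well-formedness of a parsing w.r.t. `T`. -/
def Good (T : List α) (R : List (ℕ × ℕ)) : Prop :=
  (∀ q ∈ R, 1 ≤ q.1) ∧ ∀ j < R.length, 2 ≤ lenOf R j →
    srcOf R j < startOf R j ∧
    sub T (srcOf R j) (lenOf R j) = sub T (startOf R j) (lenOf R j)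

lemma good_nil (T : List α) : Good T [] := by
  constructor
  · simp
  · intro j hj; simp at hj

lemma Good.append_one {T : List α} {R : List (ℕ × ℕ)} {ℓ s : ℕ} (hG : Good T R)
    (hl : 1 ≤ ℓ)
    (h2 : 2 ≤ ℓ → s < (R.map Prod.fst).sum ∧
      sub T s ℓ = sub T ((R.map Prod.fst).sum) ℓ) :
    Good T (R ++ [(ℓ, s)]) := by
  obtain ⟨hlen, hval⟩ := hG
  constructor
  · intro q hq
    rcases List.mem_append.mp hq with h | h
    · exact hlen q h
    · simp only [List.mem_singleton] at h
      subst h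
      exact hl
  · intro j hj h2j
    rcases lt_or_eq_of_le (Nat.lt_succ_iff.mp (by simpa using hj)) with h | h
    · rw [lenOf_append_left h, srcOf_append_left h, startOf_append_left (le_of_lt h)]
      rw [lenOf_append_left h] at h2j
      exact hval j h h2j
    · subst h
      rw [lenOf_append_right, srcOf_append_right,
        startOf_append_left (le_refl _), startOf_length]
      rw [lenOf_append_right] at h2j
      exact h2 h2j

lemma isHeight_hfun {T : List α} {P : List (ℕ × ℕ)} (hG : Good T P) :
    IsHeight P (hfun P) := by
  obtain ⟨hlen, hval⟩ := hG
  intro j hj i hi1 hi2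
  set k := i - startOf P j with hk
  have hik : i = startOf P j + k := by omega
  constructor
  · intro h1
    rw [hik]
    exact hfun_block_one hj (by omega) (by omega)
  · intro h2
    have hsrc := (hval j hj h2).1
    rw [hik]
    rw [hfun_block_step hj (by omega) h2 hsrc]

lemma hfun_last_one {R : List (ℕ × ℕ)} {ℓ s k : ℕ}
    (hk : k < ℓ) (h1 : ℓ ≤ 1) :
    hfun (R ++ [(ℓ, s)]) ((R.map Prod.fst).sum + k) = 0 := by
  have hS : startOf (R ++ [(ℓ, s)]) R.length = (R.map Prod.fst).sum := by
    rw [startOf_append_left (le_refl _), startOf_length]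
  have := hfun_block_one (P := R ++ [(ℓ, s)]) (j := R.length) (k := k)
    (by simp) (by rw [lenOf_append_right]; exact hk) (by rw [lenOf_append_right]; exact h1)
  rwa [hS] at this

lemma hfun_last_step {R : List (ℕ × ℕ)} {ℓ s k : ℕ}
    (hk : k < ℓ) (h2 : 2 ≤ ℓ) (hs : s < (R.map Prod.fst).sum) :
    hfun (R ++ [(ℓ, s)]) ((R.map Prod.fst).sum + k) =
      hfun (R ++ [(ℓ, s)]) (s + k % ((R.map Prod.fst).sum - s)) + 1 := by
  have hS : startOf (R ++ [(ℓ, s)]) R.length = (R.map Prod.fst).sum := by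
    rw [startOf_append_left (le_refl _), startOf_length]
  have := hfun_block_step (P := R ++ [(ℓ, s)]) (j := R.length) (k := k)
    (by simp) (by rw [lenOf_append_right]; exact hk) (by rw [lenOf_append_right]; exact h2)
    (by rw [srcOf_append_right, hS]; exact hs)
  rw [hS, srcOf_append_right] at this
  exact this

end GoodSec

section RL
variable {α : Type*}

/-! ### flatten/replicate lemmas -/

lemma length_flatten_replicate (r : ℕ) (w : List α) :
    ((List.replicate r w).flatten).length = r * w.length := by
  induction r with
  | zero => simp
  | succ n ih => simp [List.replicate_succ, ih, Nat.succ_mul]; ring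

lemma flatten_replicate_flatten (t r : ℕ) (w : List α) :
    (List.replicate t ((List.replicate r w).flatten)).flatten
      = (List.replicate (t * r) w).flatten := by
  induction t with
  | zero => simp
  | succ n ih =>
    rw [List.replicate_succ, List.flatten_cons, ih, Nat.succ_mul, Nat.add_comm,
      List.replicate_add, List.flatten_append]

lemma take_flatten_replicate (r : ℕ) (w : List α) (hr : 1 ≤ r) :
    ((List.replicate r w).flatten).take ((r - 1) * w.length)
      = (List.replicate (r - 1) w).flatten := by
  have h1 : List.replicate r w = List.replicate (r - 1) w ++ [w] := by
    conv_lhs => rw [show r = (r - 1) + 1 by omega]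
    rw [List.replicate_succ']
  rw [h1, List.flatten_append, ← length_flatten_replicate (r - 1) w]
  exact List.take_left

lemma drop_flatten_replicate (r : ℕ) (w : List α) (hr : 1 ≤ r) :
    ((List.replicate r w).flatten).drop w.length = (List.replicate (r - 1) w).flatten := by
  conv_lhs => rw [show r = 1 + (r - 1) by omega]
  rw [List.replicate_add, List.flatten_append]
  simp

/-! ### expand / varHeight unfolding -/

lemma expand_eq (G : RLSLP α) (i : ℕ) :
    G.expand i = match G.rule i with
      | .leaf a => [a]
      | .pair b c => if _h : b < i ∧ c < i then G.expand b ++ G.expand c else []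
      | .pow b t => if _h : b < i then (List.replicate t (G.expand b)).flatten else [] := by
  rw [RLSLP.expand]

lemma expand_leaf {G : RLSLP α} {i : ℕ} {a : α} (h : G.rule i = .leaf a) :
    G.expand i = [a] := by
  rw [expand_eq, h]

lemma expand_pair {G : RLSLP α} {i b c : ℕ} (h : G.rule i = .pair b c) (hb : b < i ∧ c < i) :
    G.expand i = G.expand b ++ G.expand c := by
  rw [expand_eq, h]; simp [hb]

lemma expand_pow {G : RLSLP α} {i b t : ℕ} (h : G.rule i = .pow b t) (hb : b < i) :
    G.expand i = (List.replicate t (G.expand b)).flatten := by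
  rw [expand_eq, h]; simp [hb]

lemma varHeight_eq (G : RLSLP α) (i : ℕ) :
    G.varHeight i = match G.rule i with
      | .leaf _ => 0
      | .pair b c => if _h : b < i ∧ c < i then max (G.varHeight b) (G.varHeight c) + 1 else 0
      | .pow b _ => if _h : b < i then G.varHeight b + 1 else 0 := by
  rw [RLSLP.varHeight]

lemma varHeight_pair {G : RLSLP α} {i b c : ℕ} (h : G.rule i = .pair b c) (hb : b < i ∧ c < i) :
    G.varHeight i = max (G.varHeight b) (G.varHeight c) + 1 := by
  rw [varHeight_eq, h]; simp [hb]

lemma varHeight_pow {G : RLSLP α} {i b t : ℕ} (h : G.rule i = .pow b t) (hb : b < i) :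
    G.varHeight i = G.varHeight b + 1 := by
  rw [varHeight_eq, h]; simp [hb]

lemma expand_ne_nil {G : RLSLP α} : ∀ i, i < G.m → G.expand i ≠ [] := by
  intro i
  induction i using Nat.strong_induction_on with
  | _ i ih =>
    intro him
    match hr : G.rule i with
    | .leaf a => rw [expand_leaf hr]; simp
    | .pair b c =>
      have hb := G.wf_pair i b c him hr
      rw [expand_pair hr hb]
      have := ih b hb.1 (by omega)
      simp [this]
    | .pow b t =>
      have hb := G.wf_pow i b t him hr
      rw [expand_pow hr hb.1]
      have h1 := ih b hb.1 (by omega)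
      intro hcon
      have : t * (G.expand b).length = 0 := by
        rw [← length_flatten_replicate, hcon]; simp
      have : 0 < (G.expand b).length := List.length_pos_iff.mpr h1
      nlinarith [hb.2]

lemma expand_len_pos {G : RLSLP α} {i : ℕ} (h : i < G.m) : 0 < (G.expand i).length :=
  List.length_pos_iff.mpr (expand_ne_nil i h)

/-! ### chainBase -/

def chainBase (G : RLSLP α) (i : ℕ) : ℕ × ℕ :=
  match G.rule i with
  | .pow b t => if _h : b < i then ((chainBase G b).1, t * (chainBase G b).2) else (i, 1)
  | _ => (i, 1)
termination_by i

lemma chainBase_eq (G : RLSLP α) (i : ℕ) :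
    chainBase G i = match G.rule i with
      | .pow b t => if _h : b < i then ((chainBase G b).1, t * (chainBase G b).2) else (i, 1)
      | _ => (i, 1) := by
  rw [chainBase]

lemma chainBase_fst_le (G : RLSLP α) : ∀ i, (chainBase G i).1 ≤ i := by
  intro i
  induction i using Nat.strong_induction_on with
  | _ i ih =>
    rw [chainBase_eq]
    match hr : G.rule i with
    | .pow b t =>
      by_cases hb : b < i
      · simp only [dif_pos hb]
        exact le_trans (ih b hb) (le_of_lt hb)
      · simp [dif_neg hb]
    | .leaf a => simp
    | .pair b c => simp

lemma chainBase_snd_pos (G : RLSLP α) : ∀ i, i < G.m → 1 ≤ (chainBase G i).2 := by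
  intro i
  induction i using Nat.strong_induction_on with
  | _ i ih =>
    intro him
    rw [chainBase_eq]
    match hr : G.rule i with
    | .pow b t =>
      have hwf := G.wf_pow i b t him hr
      simp only [dif_pos hwf.1]
      have h1 := ih b hwf.1 (by omega)
      have ht : 1 ≤ t := by omega
      exact Nat.one_le_iff_ne_zero.mpr (by positivity)
    | .leaf a => simp
    | .pair b c => simp

end RL

section RL2
variable {α : Type*}

lemma chainBase_fst_lt_m (G : RLSLP α) {i : ℕ} (h : i < G.m) : (chainBase G i).1 < G.m :=
  lt_of_le_of_lt (chainBase_fst_le G i) h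

lemma chainBase_exp (G : RLSLP α) : ∀ i, i < G.m →
    G.expand i = (List.replicate (chainBase G i).2 (G.expand (chainBase G i).1)).flatten := by
  intro i
  induction i using Nat.strong_induction_on with
  | _ i ih =>
    intro him
    rw [chainBase_eq]
    match hr : G.rule i with
    | .pow b t =>
      have hwf := G.wf_pow i b t him hr
      simp only [dif_pos hwf.1]
      rw [expand_pow hr hwf.1, ih b hwf.1 (by omega), flatten_replicate_flatten]
    | .leaf a => simp [List.flatten]
    | .pair b c => simp [List.flatten]

lemma chainBase_vH (G : RLSLP α) : ∀ i, i < G.m →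
    G.varHeight (chainBase G i).1 ≤ G.varHeight i := by
  intro i
  induction i using Nat.strong_induction_on with
  | _ i ih =>
    intro him
    rw [chainBase_eq]
    match hr : G.rule i with
    | .pow b t =>
      have hwf := G.wf_pow i b t him hr
      simp only [dif_pos hwf.1]
      calc G.varHeight (chainBase G b).1 ≤ G.varHeight b := ih b hwf.1 (by omega)
        _ ≤ G.varHeight i := by rw [varHeight_pow hr hwf.1]; omega
    | .leaf a => simp
    | .pair b c => simp

lemma chainBase_not_pow (G : RLSLP α) : ∀ i, i < G.m →
    ∀ b t, G.rule (chainBase G i).1 ≠ .pow b t := by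
  intro i
  induction i using Nat.strong_induction_on with
  | _ i ih =>
    intro him b t
    rw [chainBase_eq]
    match hr : G.rule i with
    | .pow b' t' =>
      have hwf := G.wf_pow i b' t' him hr
      simp only [dif_pos hwf.1]
      exact ih b' hwf.1 (by omega) b t
    | .leaf a => simp; rw [hr]; simp
    | .pair b' c' => simp; rw [hr]; simp

/-! ### Phi (potential) and invariants -/

def Phi (G : RLSLP α) (seen : ℕ → Option ℕ) : ℕ :=
  ((Finset.range G.m).filter (fun j => (seen j).isSome)).card

lemma Phi_le (G : RLSLP α) (seen : ℕ → Option ℕ) : Phi G seen ≤ G.m := by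
  calc Phi G seen ≤ (Finset.range G.m).card := Finset.card_filter_le _ _
    _ = G.m := Finset.card_range _

lemma Phi_update (G : RLSLP α) {seen : ℕ → Option ℕ} {i pos : ℕ} (him : i < G.m)
    (hnone : seen i = none) :
    Phi G (Function.update seen i (some pos)) = Phi G seen + 1 := by
  unfold Phi
  have : (Finset.range G.m).filter (fun j => ((Function.update seen i (some pos)) j).isSome)
      = insert i ((Finset.range G.m).filter (fun j => (seen j).isSome)) := by
    ext j
    simp only [Finset.mem_filter, Finset.mem_insert, Finset.mem_range, Function.update_apply]
    by_cases hj : j = i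
    · subst hj; simp [him]
    · simp [hj]
  rw [this, Finset.card_insert_of_notMem (by simp [hnone])]

lemma Phi_mono (G : RLSLP α) {s1 s2 : ℕ → Option ℕ}
    (h : ∀ j s, s1 j = some s → s2 j = some s) : Phi G s1 ≤ Phi G s2 := by
  apply Finset.card_le_card
  intro j hj
  simp only [Finset.mem_filter, Finset.mem_range] at *
  refine ⟨hj.1, ?_⟩
  obtain ⟨s, hs⟩ := Option.isSome_iff_exists.mp hj.2
  rw [h j s hs]
  rfl

def SeenInv (G : RLSLP α) (T : List α) (seen : ℕ → Option ℕ) (pos : ℕ) : Prop :=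
  ∀ j s, seen j = some s → j < G.m ∧ s + (G.expand j).length ≤ pos ∧
    sub T s (G.expand j).length = G.expand j

def TightInv (G : RLSLP α) (Q : List (ℕ × ℕ)) (seen : ℕ → Option ℕ) : Prop :=
  ∀ j s, seen j = some s → ∀ k, k < (G.expand j).length →
    hfun Q (s + k) ≤ G.varHeight j

lemma SeenInv.mono {G : RLSLP α} {T : List α} {seen : ℕ → Option ℕ} {pos pos' : ℕ}
    (h : SeenInv G T seen pos) (hle : pos ≤ pos') : SeenInv G T seen pos' := by
  intro j s hs
  obtain ⟨h1, h2, h3⟩ := h j s hs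
  exact ⟨h1, by omega, h3⟩

end RL2

section Emit
variable {α : Type*}

def emit (G : RLSLP α) (tag i pos : ℕ) (seen : ℕ → Option ℕ) :
    List (ℕ × ℕ) × (ℕ → Option ℕ) :=
  if htag : tag = 0 then
    match G.rule i with
    | .leaf _ => ([(1, 0)], Function.update seen i (some pos))
    | .pair b c =>
      if h : b < i ∧ c < i then
        let r1 := emit G 2 b pos seen
        let r2 := emit G 2 c (pos + (G.expand b).length) r1.2
        (r1.1 ++ r2.1, Function.update r2.2 i (some pos))
      else ([], Function.update seen i (some pos))
    | .pow b t =>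
      if h : b < i then
        let c := (chainBase G b).1
        let r := t * (chainBase G b).2
        let L := (G.expand c).length
        let r1 := emit G 1 c pos seen
        (r1.1 ++ [(r * L - L, pos)], Function.update r1.2 i (some pos))
      else ([], Function.update seen i (some pos))
  else if htag1 : tag = 1 then
    match seen i with
    | none => emit G 0 i pos seen
    | some s =>
      match G.rule i with
      | .leaf _ => ([(1, 0)], seen)
      | .pair b c =>
        if h : b < i ∧ c < i then
          let r1 := emit G 2 b pos seen
          let r2 := emit G 2 c (pos + (G.expand b).length) r1.2
          (r1.1 ++ r2.1, r2.2)
        else ([], seen)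
      | .pow _ _ => ([((G.expand i).length, s)], seen)
  else
    match seen i with
    | some s => ([((G.expand i).length, s)], seen)
    | none => emit G 0 i pos seen
termination_by (3 * i + min tag 2)
decreasing_by
  · omega
  · omega
  · have := chainBase_fst_le G b; omega
  · omega
  · omega
  · omega
  · omega

end Emit

section EmitEq
variable {α : Type*}

lemma emit_copy_some {G : RLSLP α} {i pos s : ℕ} {seen : ℕ → Option ℕ}
    (hs : seen i = some s) :
    emit G 2 i pos seen = ([((G.expand i).length, s)], seen) := by
  rw [emit]
  simp [hs]

lemma emit_copy_none {G : RLSLP α} {i pos : ℕ} {seen : ℕ → Option ℕ}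
    (hs : seen i = none) :
    emit G 2 i pos seen = emit G 0 i pos seen := by
  rw [emit]
  simp only [hs]
  norm_num

lemma emit_tight_none {G : RLSLP α} {i pos : ℕ} {seen : ℕ → Option ℕ}
    (hs : seen i = none) :
    emit G 1 i pos seen = emit G 0 i pos seen := by
  rw [emit]
  simp only [hs]
  norm_num

lemma emit_tight_leaf {G : RLSLP α} {i pos s : ℕ} {seen : ℕ → Option ℕ} {a : α}
    (hs : seen i = some s) (hr : G.rule i = .leaf a) :
    emit G 1 i pos seen = ([(1, 0)], seen) := by
  rw [emit]
  simp only [hs, hr]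
  norm_num

lemma emit_tight_pair {G : RLSLP α} {i pos s b c : ℕ} {seen : ℕ → Option ℕ}
    (hs : seen i = some s) (hr : G.rule i = .pair b c) (h : b < i ∧ c < i) :
    emit G 1 i pos seen =
      ((emit G 2 b pos seen).1 ++
        (emit G 2 c (pos + (G.expand b).length) (emit G 2 b pos seen).2).1,
       (emit G 2 c (pos + (G.expand b).length) (emit G 2 b pos seen).2).2) := by
  rw [emit]
  simp only [hs, hr]
  norm_num [dif_pos h]

lemma emit_fresh_leaf {G : RLSLP α} {i pos : ℕ} {seen : ℕ → Option ℕ} {a : α}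
    (hr : G.rule i = .leaf a) :
    emit G 0 i pos seen = ([(1, 0)], Function.update seen i (some pos)) := by
  rw [emit]
  simp [hr]

lemma emit_fresh_pair {G : RLSLP α} {i pos b c : ℕ} {seen : ℕ → Option ℕ}
    (hr : G.rule i = .pair b c) (h : b < i ∧ c < i) :
    emit G 0 i pos seen =
      ((emit G 2 b pos seen).1 ++
        (emit G 2 c (pos + (G.expand b).length) (emit G 2 b pos seen).2).1,
       Function.update
         (emit G 2 c (pos + (G.expand b).length) (emit G 2 b pos seen).2).2 i (some pos)) := by
  rw [emit]
  simp [hr, dif_pos h]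

lemma emit_fresh_pow {G : RLSLP α} {i pos b t : ℕ} {seen : ℕ → Option ℕ}
    (hr : G.rule i = .pow b t) (h : b < i) :
    emit G 0 i pos seen =
      ((emit G 1 (chainBase G b).1 pos seen).1 ++
        [(t * (chainBase G b).2 * (G.expand (chainBase G b).1).length
            - (G.expand (chainBase G b).1).length, pos)],
       Function.update (emit G 1 (chainBase G b).1 pos seen).2 i (some pos)) := by
  rw [emit]
  simp [hr, dif_pos h]

end EmitEq

section Master
variable {α : Type*}

def MIn (G : RLSLP α) (T : List α) (i pos : ℕ) (seen : ℕ → Option ℕ)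
    (Q : List (ℕ × ℕ)) : Prop :=
  i < G.m ∧ sub T pos (G.expand i).length = G.expand i ∧
  SeenInv G T seen pos ∧ TightInv G Q seen ∧ Good T Q ∧ (Q.map Prod.fst).sum = pos

def MOutGen (G : RLSLP α) (T : List α) (i pos : ℕ) (seen : ℕ → Option ℕ)
    (Q P : List (ℕ × ℕ)) (seen' : ℕ → Option ℕ) (hslack cslack : ℕ) : Prop :=
  ((P.map Prod.fst).sum = (G.expand i).length) ∧
  Good T (Q ++ P) ∧
  SeenInv G T seen' (pos + (G.expand i).length) ∧
  TightInv G (Q ++ P) seen' ∧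
  (∀ j, i < j → seen' j = seen j) ∧
  (∀ j s, seen j = some s → seen' j = some s) ∧
  (P.length + 3 * Phi G seen ≤ 3 * Phi G seen' + cslack) ∧
  (∀ k, k < (G.expand i).length → hfun (Q ++ P) (pos + k) ≤ G.varHeight i + hslack)

lemma copy_case (G : RLSLP α) (T : List α) {i pos s : ℕ} {seen : ℕ → Option ℕ}
    {Q : List (ℕ × ℕ)} (hin : MIn G T i pos seen Q) (hs : seen i = some s) :
    MOutGen G T i pos seen Q [((G.expand i).length, s)] seen 1 1 := by
  obtain ⟨him, hocc, hseen, htight, hgood, hsum⟩ := hin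
  set n := (G.expand i).length with hn
  have hnpos : 1 ≤ n := expand_len_pos him
  obtain ⟨hjm, hsn, hssub⟩ := hseen i s hs
  have hv : ∀ j < Q.length, 2 ≤ lenOf Q j → srcOf Q j < startOf Q j :=
    fun j hj h2 => (hgood.2 j hj h2).1
  have hpre : ∀ x, x < pos → hfun (Q ++ [(n, s)]) x = hfun Q x := by
    intro x hx
    exact hfun_prefix hgood.1 hv x (by omega)
  refine ⟨by simp [hn], ?_, hseen.mono (by omega), ?_, fun j _ => rfl, fun j s' h => h, ?_, ?_⟩
  · -- Good
    refine hgood.append_one hnpos ?_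
    intro h2
    rw [hsum]
    exact ⟨by omega, by rw [hssub, hocc]⟩
  · -- TightInv
    intro j s' hs' k hk
    obtain ⟨hjm', hsn', _⟩ := hseen j s' hs'
    rw [hpre _ (by omega)]
    exact htight j s' hs' k hk
  · -- count
    simp
    omega
  · -- heights
    intro k hk
    by_cases h1 : n ≤ 1
    · have := hfun_last_one (R := Q) (s := s) hk h1
      rw [hsum] at this
      rw [this]
      omega
    · have hstep := hfun_last_step (R := Q) (s := s) hk (by omega) (by omega : s < (Q.map Prod.fst).sum)
      rw [hsum] at hstep
      rw [hstep, Nat.mod_eq_of_lt (by omega : k < pos - s)]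
      rw [hpre _ (by omega)]
      have := htight i s hs k hk
      omega

end Master

section PairCore
variable {α : Type*}

lemma sum_append_fst (Q P : List (ℕ × ℕ)) :
    ((Q ++ P).map Prod.fst).sum = (Q.map Prod.fst).sum + (P.map Prod.fst).sum := by
  simp

lemma pair_core (G : RLSLP α) (T : List α) {i pos b c : ℕ} {seen : ℕ → Option ℕ}
    {Q : List (ℕ × ℕ)}
    (IH : ∀ i' pos' (seen' : ℕ → Option ℕ) (Q' : List (ℕ × ℕ)), i' < i →
      MIn G T i' pos' seen' Q' →
      MOutGen G T i' pos' seen' Q' (emit G 2 i' pos' seen').1 (emit G 2 i' pos' seen').2 1 1)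
    (hin : MIn G T i pos seen Q) (hr : G.rule i = .pair b c) (h : b < i ∧ c < i) :
    MOutGen G T i pos seen Q
      ((emit G 2 b pos seen).1 ++
        (emit G 2 c (pos + (G.expand b).length) (emit G 2 b pos seen).2).1)
      (emit G 2 c (pos + (G.expand b).length) (emit G 2 b pos seen).2).2 0 2 ∧
    (∀ j, b < j → c < j →
      (emit G 2 c (pos + (G.expand b).length) (emit G 2 b pos seen).2).2 j = seen j) := by
  obtain ⟨him, hocc, hseen, htight, hgood, hsum⟩ := hin
  have hexp : G.expand i = G.expand b ++ G.expand c := expand_pair hr h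
  set nb := (G.expand b).length with hnb
  set nc := (G.expand c).length with hnc
  have hn : (G.expand i).length = nb + nc := by rw [hexp]; simp [hnb, hnc]
  have hoccb : sub T pos nb = G.expand b := by
    rw [hnb, sub_take T pos (G.expand b).length (G.expand i).length (by omega), hocc, hexp]
    exact List.take_left
  have IH1 := IH b pos seen Q h.1 ⟨by omega, hoccb, hseen, htight, hgood, hsum⟩
  obtain ⟨e1sum, e1good, e1seen, e1tight, e1mono, e1some, e1count, e1h⟩ := IH1
  set P1 := (emit G 2 b pos seen).1 with hP1
  set s1 := (emit G 2 b pos seen).2 with hs1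
  have hsum1 : ((Q ++ P1).map Prod.fst).sum = pos + nb := by
    rw [sum_append_fst, hsum, e1sum]
  have hoccc : sub T (pos + nb) nc = G.expand c := by
    rw [hnc, sub_shift T pos nb (G.expand c).length (G.expand i).length (by omega), hocc, hexp]
    rw [List.drop_left, List.take_length]
  have IH2 := IH c (pos + nb) s1 (Q ++ P1) h.2
    ⟨by omega, hoccc, e1seen, e1tight, e1good, hsum1⟩
  obtain ⟨e2sum, e2good, e2seen, e2tight, e2mono, e2some, e2count, e2h⟩ := IH2
  set P2 := (emit G 2 c (pos + nb) s1).1 with hP2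
  set s2 := (emit G 2 c (pos + nb) s1).2 with hs2
  have hassoc : Q ++ (P1 ++ P2) = (Q ++ P1) ++ P2 := by rw [List.append_assoc]
  have hvH : G.varHeight i = max (G.varHeight b) (G.varHeight c) + 1 := varHeight_pair hr h
  constructor
  · refine ⟨?_, ?_, ?_, ?_, ?_, ?_, ?_, ?_⟩
    · rw [List.map_append, List.sum_append, e1sum, e2sum, hn]
    · rw [hassoc]; exact e2good
    · rw [hn, ← Nat.add_assoc]; exact e2seen
    · rw [hassoc]; exact e2tight
    · intro j hj
      rw [e2mono j (by omega), e1mono j (by omega)]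
    · intro j s hs
      exact e2some j s (e1some j s hs)
    · rw [List.length_append]
      omega
    · intro k hk
      by_cases hkb : k < nb
      · have hvQP1 : ∀ j < (Q ++ P1).length, 2 ≤ lenOf (Q ++ P1) j →
            srcOf (Q ++ P1) j < startOf (Q ++ P1) j :=
          fun j hj h2 => (e1good.2 j hj h2).1
        rw [hassoc, hfun_prefix e1good.1 hvQP1 (pos + k) (by omega)]
        have := e1h k hkb
        omega
      · have hk2 : k - nb < nc := by omega
        have := e2h (k - nb) hk2
        rw [show pos + nb + (k - nb) = pos + k by omega, ← hassoc] at this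
        omega
  · intro j hbj hcj
    rw [e2mono j hcj, e1mono j hbj]

end PairCore

section PowCore
variable {α : Type*}

lemma take_len_flatten_replicate (r : ℕ) (w : List α) (hr : 1 ≤ r) :
    ((List.replicate r w).flatten).take w.length = w := by
  conv_lhs => rw [show r = 1 + (r - 1) by omega]
  rw [List.replicate_add, List.flatten_append]
  simp [List.take_left]

lemma pow_core (G : RLSLP α) (T : List α) {i pos b t : ℕ} {seen : ℕ → Option ℕ}
    {Q : List (ℕ × ℕ)}
    (IH1 : MIn G T (chainBase G b).1 pos seen Q →
      MOutGen G T (chainBase G b).1 pos seen Q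
        (emit G 1 (chainBase G b).1 pos seen).1 (emit G 1 (chainBase G b).1 pos seen).2 0 2)
    (hin : MIn G T i pos seen Q) (hr : G.rule i = .pow b t) (hb : b < i) :
    MOutGen G T i pos seen Q
      ((emit G 1 (chainBase G b).1 pos seen).1 ++
        [(t * (chainBase G b).2 * (G.expand (chainBase G b).1).length
            - (G.expand (chainBase G b).1).length, pos)])
      (emit G 1 (chainBase G b).1 pos seen).2 0 3 ∧
    (∀ j, (chainBase G b).1 < j →
      (emit G 1 (chainBase G b).1 pos seen).2 j = seen j) := by
  obtain ⟨him, hocc, hseen, htight, hgood, hsum⟩ := hin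
  set c := (chainBase G b).1 with hc
  set r := t * (chainBase G b).2 with hrr
  set w := G.expand c with hw
  set L := w.length with hL
  have hLL : (G.expand c).length = L := rfl
  have hbm : b < G.m := by omega
  have hcm : c < G.m := chainBase_fst_lt_m G hbm
  have hLpos : 1 ≤ L := expand_len_pos hcm
  have hwf := G.wf_pow i b t him hr
  have hr2 : 2 ≤ r := by
    have h1 := chainBase_snd_pos G b hbm
    calc 2 = 2 * 1 := by omega
      _ ≤ t * (chainBase G b).2 := Nat.mul_le_mul hwf.2 h1
  have hexp : G.expand i = (List.replicate r w).flatten := by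
    rw [expand_pow hr hb, chainBase_exp G b hbm, flatten_replicate_flatten]
  have hn : (G.expand i).length = r * L := by rw [hexp, length_flatten_replicate]
  set n := (G.expand i).length with hnn
  have hLn : L ≤ n := by
    rw [hn]; calc L = 1 * L := by omega
      _ ≤ r * L := Nat.mul_le_mul_right _ (by omega)
  set ℓ := r * L - L with hℓ
  have hℓeq : ℓ = (r - 1) * L := by rw [hℓ, Nat.sub_one_mul]
  have hℓpos : 1 ≤ ℓ := by
    rw [hℓeq]
    calc 1 = 1 * 1 := by omega
      _ ≤ (r - 1) * L := Nat.mul_le_mul (by omega) hLpos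
  have hoccc : sub T pos L = w := by
    rw [hL, sub_take T pos w.length n (by omega), hocc, hexp]
    exact take_len_flatten_replicate r w (by omega)
  have E1 := IH1 ⟨hcm, hoccc, hseen, htight, hgood, hsum⟩
  obtain ⟨e1sum, e1good, e1seen, e1tight, e1mono, e1some, e1count, e1h⟩ := E1
  set P1 := (emit G 1 c pos seen).1 with hP1
  set s1 := (emit G 1 c pos seen).2 with hs1
  have hsum1 : ((Q ++ P1).map Prod.fst).sum = pos + L := by
    rw [sum_append_fst, hsum, e1sum]
  have hassoc : Q ++ (P1 ++ [(ℓ, pos)]) = (Q ++ P1) ++ [(ℓ, pos)] := by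
    rw [List.append_assoc]
  have hvH : G.varHeight i = G.varHeight b + 1 := varHeight_pow hr hb
  have hvHc : G.varHeight c ≤ G.varHeight b := chainBase_vH G b hbm
  -- periodic copy equality
  have hcopy : 2 ≤ ℓ → sub T pos ℓ = sub T (pos + L) ℓ := by
    intro _
    have h1 : sub T pos ℓ = (List.replicate (r - 1) w).flatten := by
      rw [sub_take T pos ℓ n (by omega), hocc, hexp, hℓeq, hL]
      exact take_flatten_replicate r w (by omega)
    have h2 : sub T (pos + L) ℓ = (List.replicate (r - 1) w).flatten := by
      rw [sub_shift T pos L ℓ n (by omega), hocc, hexp, hL, drop_flatten_replicate r w (by omega)]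
      rw [hℓeq, ← length_flatten_replicate (r - 1) w]
      exact List.take_length
    rw [h1, h2]
  -- prefix transfer
  have hvQP1 : ∀ j < (Q ++ P1).length, 2 ≤ lenOf (Q ++ P1) j →
      srcOf (Q ++ P1) j < startOf (Q ++ P1) j :=
    fun j hj h2 => (e1good.2 j hj h2).1
  have hpre : ∀ x, x < pos + L →
      hfun ((Q ++ P1) ++ [(ℓ, pos)]) x = hfun (Q ++ P1) x := by
    intro x hx
    exact hfun_prefix e1good.1 hvQP1 x (by omega)
  refine ⟨⟨?_, ?_, ?_, ?_, ?_, e1some, ?_, ?_⟩, fun j hj => e1mono j hj⟩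
  · simp only [List.map_append, List.sum_append, e1sum]
    simp [hn]
    omega
  · rw [hassoc]
    refine e1good.append_one hℓpos ?_
    intro h2
    rw [hsum1]
    exact ⟨by omega, by rw [hcopy h2]⟩
  · refine e1seen.mono (by omega)
  · intro j s' hs' k hk
    obtain ⟨hjm', hsn', _⟩ := e1seen j s' hs'
    rw [hassoc, hpre _ (by omega)]
    exact e1tight j s' hs' k hk
  · intro j hj
    exact e1mono j (by have := chainBase_fst_le G b; omega)
  · rw [List.length_append]
    simp
    omega
  · intro k hk
    rw [hassoc]
    by_cases hkL : k < L
    · rw [hpre _ (by omega)]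
      have := e1h k (by omega)
      omega
    · have hk' : k - L < ℓ := by omega
      by_cases h1 : ℓ ≤ 1
      · have := hfun_last_one (R := Q ++ P1) (s := pos) hk' h1
        rw [hsum1, show pos + L + (k - L) = pos + k by omega] at this
        rw [this]
        omega
      · have hstep := hfun_last_step (R := Q ++ P1) (s := pos) hk' (by omega)
          (by rw [hsum1]; omega)
        rw [hsum1, show pos + L + (k - L) = pos + k by omega,
          show pos + L - pos = L by omega] at hstep
        have hmod : (k - L) % L < L := Nat.mod_lt _ (by omega)
        rw [hstep, hpre _ (by omega : pos + (k - L) % L < pos + L)]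
        have := e1h ((k - L) % L) (by omega)
        omega
  
end PowCore

section LeafCore
variable {α : Type*}

lemma MOutGen.mono_slack {G : RLSLP α} {T : List α} {i pos : ℕ} {seen seen' : ℕ → Option ℕ}
    {Q P : List (ℕ × ℕ)} {h1 c1 h2 c2 : ℕ} (hh : h1 ≤ h2) (hc : c1 ≤ c2)
    (h : MOutGen G T i pos seen Q P seen' h1 c1) : MOutGen G T i pos seen Q P seen' h2 c2 := by
  obtain ⟨a1, a2, a3, a4, a5, a6, a7, a8⟩ := h
  refine ⟨a1, a2, a3, a4, a5, a6, by omega, ?_⟩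
  intro k hk
  have := a8 k hk
  omega

lemma leaf_core (G : RLSLP α) (T : List α) {i pos : ℕ} {seen : ℕ → Option ℕ}
    {Q : List (ℕ × ℕ)} {a : α}
    (hin : MIn G T i pos seen Q) (hr : G.rule i = .leaf a) :
    ((([((1 : ℕ), (0 : ℕ))].map Prod.fst).sum = (G.expand i).length) ∧
     Good T (Q ++ [(1, 0)]) ∧
     (∀ k, k < (G.expand i).length → hfun (Q ++ [(1, 0)]) (pos + k) = 0)) := by
  obtain ⟨him, hocc, hseen, htight, hgood, hsum⟩ := hin
  have hexp : G.expand i = [a] := expand_leaf hr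
  have hn : (G.expand i).length = 1 := by rw [hexp]; rfl
  refine ⟨by simp [hn], ?_, ?_⟩
  · exact hgood.append_one (by omega) (by omega)
  · intro k hk
    have hk0 : k = 0 := by omega
    subst hk0
    have := hfun_last_one (R := Q) (ℓ := 1) (s := 0) (k := 0) (by omega) (by omega)
    rwa [hsum, Nat.add_zero] at this

lemma tight_transfer (G : RLSLP α) (T : List α) {pos : ℕ} {seen : ℕ → Option ℕ}
    {Q P : List (ℕ × ℕ)}
    (hseen : SeenInv G T seen pos) (htight : TightInv G Q seen)
    (hgood : Good T Q) (hsum : (Q.map Prod.fst).sum = pos) :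
    TightInv G (Q ++ P) seen := by
  intro j s hs k hk
  obtain ⟨hjm, hsn, _⟩ := hseen j s hs
  rw [hfun_prefix hgood.1 (fun j hj h2 => (hgood.2 j hj h2).1) (s + k) (by omega)]
  exact htight j s hs k hk

end LeafCore

section MasterProof
variable {α : Type*}

lemma SeenInv.update' {G : RLSLP α} {T : List α} {seen' : ℕ → Option ℕ} {i pos : ℕ}
    (h : SeenInv G T seen' (pos + (G.expand i).length)) (him : i < G.m)
    (hocc : sub T pos (G.expand i).length = G.expand i) :
    SeenInv G T (Function.update seen' i (some pos)) (pos + (G.expand i).length) := by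
  intro j s hs
  by_cases hji : j = i
  · subst hji
    rw [Function.update_self] at hs
    cases hs
    exact ⟨him, le_refl _, hocc⟩
  · rw [Function.update_of_ne hji] at hs
    exact h j s hs

lemma TightInv.update' {G : RLSLP α} {Q' : List (ℕ × ℕ)} {seen' : ℕ → Option ℕ} {i pos : ℕ}
    (h : TightInv G Q' seen')
    (hh : ∀ k, k < (G.expand i).length → hfun Q' (pos + k) ≤ G.varHeight i) :
    TightInv G Q' (Function.update seen' i (some pos)) := by
  intro j s hs k hk
  by_cases hji : j = i
  · subst hji
    rw [Function.update_self] at hs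
    cases hs
    exact hh k hk
  · rw [Function.update_of_ne hji] at hs
    exact h j s hs k hk

lemma seen_update_some {seen : ℕ → Option ℕ} {i pos : ℕ} (hnone : seen i = none) :
    ∀ j s, seen j = some s → Function.update seen i (some pos) j = some s := by
  intro j s hs
  by_cases hji : j = i
  · subst hji; rw [hnone] at hs; cases hs
  · rw [Function.update_of_ne hji]; exact hs

theorem master (G : RLSLP α) (T : List α) :
    ∀ N tag i pos (seen : ℕ → Option ℕ) (Q : List (ℕ × ℕ)),
      3 * i + tag ≤ N → tag ≤ 2 →
      MIn G T i pos seen Q →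
      (tag = 0 → seen i = none) →
      (tag = 1 → ∀ b t, G.rule i ≠ .pow b t) →
      MOutGen G T i pos seen Q (emit G tag i pos seen).1 (emit G tag i pos seen).2
        (if tag ≤ 1 then 0 else 1) (if tag = 0 then 0 else if tag = 1 then 2 else 1) := by
  intro N
  induction N using Nat.strong_induction_on with
  | _ N ih =>
    intro tag i pos seen Q hN htag hin h0 h1
    have him : i < G.m := hin.1
    have hocc : sub T pos (G.expand i).length = G.expand i := hin.2.1
    have hseen : SeenInv G T seen pos := hin.2.2.1
    have htight : TightInv G Q seen := hin.2.2.2.1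
    have hgood : Good T Q := hin.2.2.2.2.1
    have hsum : (Q.map Prod.fst).sum = pos := hin.2.2.2.2.2
    have IH2 : ∀ i' pos' (seen' : ℕ → Option ℕ) (Q' : List (ℕ × ℕ)), i' < i →
        MIn G T i' pos' seen' Q' →
        MOutGen G T i' pos' seen' Q' (emit G 2 i' pos' seen').1 (emit G 2 i' pos' seen').2
          1 1 := by
      intro i' pos' seen' Q' hii hin'
      exact ih (N - 1) (by omega) 2 i' pos' seen' Q' (by omega) (by omega) hin'
        (by simp) (by simp)
    interval_cases tag
    · -- tag = 0 (fresh)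
      have hnone := h0 rfl
      cases hr : G.rule i with
      | leaf a =>
        have lc := leaf_core G T hin hr
        rw [emit_fresh_leaf hr]
        dsimp only
        refine ⟨lc.1, lc.2.1, ?_, ?_, ?_, seen_update_some hnone, ?_, ?_⟩
        · exact (hseen.mono (by omega)).update' him hocc
        · refine (tight_transfer G T hseen htight hgood hsum).update' ?_
          intro k hk
          rw [lc.2.2 k hk]
          omega
        · intro j hj
          rw [Function.update_of_ne (by omega)]
        · rw [Phi_update G him hnone,
            show ([((1:ℕ),(0:ℕ))].length) = 1 from rfl,
            show (if (0:ℕ) = 0 then (0:ℕ) else if (0:ℕ) = 1 then 2 else 1) = 0 from rfl]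
          omega
        · intro k hk
          rw [lc.2.2 k hk]
          omega
      | pair b c =>
        have h := G.wf_pair i b c him hr
        have pc := pair_core G T IH2 hin hr h
        obtain ⟨⟨a1, a2, a3, a4, a5, a6, a7, a8⟩, hmono2⟩ := pc
        rw [emit_fresh_pair hr h]
        dsimp only
        have hs2i : (emit G 2 c (pos + (G.expand b).length) (emit G 2 b pos seen).2).2 i
            = none := by rw [hmono2 i h.1 h.2]; exact hnone
        refine ⟨a1, a2, a3.update' him hocc, a4.update' a8, ?_, ?_, ?_, ?_⟩
        · intro j hj
          rw [Function.update_of_ne (by omega)]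
          exact a5 j hj
        · intro j s hs
          by_cases hji : j = i
          · subst hji; rw [hnone] at hs; cases hs
          · rw [Function.update_of_ne hji]
            exact a6 j s hs
        · rw [Phi_update G him hs2i]
          simp only [List.length_append] at a7 ⊢
          omega
        · intro k hk
          have := a8 k hk
          simpa using this
      | pow b t =>
        have hwf := G.wf_pow i b t him hr
        have hb := hwf.1
        have hbm : b < G.m := by omega
        have hcle := chainBase_fst_le G b
        have IH1 : MIn G T (chainBase G b).1 pos seen Q →
            MOutGen G T (chainBase G b).1 pos seen Q
              (emit G 1 (chainBase G b).1 pos seen).1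
              (emit G 1 (chainBase G b).1 pos seen).2 0 2 := by
          intro hin'
          exact ih (N - 1) (by omega) 1 (chainBase G b).1 pos seen Q (by omega)
            (by omega) hin' (by simp) (fun _ => chainBase_not_pow G b hbm)
        have pc := pow_core G T IH1 hin hr hb
        obtain ⟨⟨a1, a2, a3, a4, a5, a6, a7, a8⟩, hmono1⟩ := pc
        rw [emit_fresh_pow hr hb]
        dsimp only
        have hs1i : (emit G 1 (chainBase G b).1 pos seen).2 i = none := by
          rw [hmono1 i (by omega)]; exact hnone
        refine ⟨a1, a2, a3.update' him hocc, a4.update' a8, ?_, ?_, ?_, ?_⟩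
        · intro j hj
          rw [Function.update_of_ne (by omega)]
          exact a5 j hj
        · intro j s hs
          by_cases hji : j = i
          · subst hji; rw [hnone] at hs; cases hs
          · rw [Function.update_of_ne hji]
            exact a6 j s hs
        · rw [Phi_update G him hs1i]
          simp only [List.length_append] at a7 ⊢
          omega
        · intro k hk
          have := a8 k hk
          simpa using this
    · -- tag = 1 (tight)
      have hnp := h1 rfl
      cases hseeni : seen i with
      | none =>
        rw [emit_tight_none hseeni]
        have h : MOutGen G T i pos seen Q (emit G 0 i pos seen).1 (emit G 0 i pos seen).2
            0 0 := ih (N - 1) (by omega) 0 i pos seen Q (by omega) (by omega) hin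
          (fun _ => hseeni) (by simp)
        exact h.mono_slack (by norm_num) (by norm_num)
      | some s =>
        cases hr : G.rule i with
        | leaf a =>
          have lc := leaf_core G T hin hr
          have hn : (G.expand i).length = 1 := by rw [expand_leaf hr]; rfl
          rw [emit_tight_leaf hseeni hr]
          dsimp only
          refine ⟨lc.1, lc.2.1, hseen.mono (by omega), ?_, fun j _ => rfl,
            fun j s' h => h, ?_, ?_⟩
          · exact tight_transfer G T hseen htight hgood hsum
          · rw [show (if (1:ℕ) = 0 then (0:ℕ) else if (1:ℕ) = 1 then 2 else 1) = 2 from rfl]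
            simp only [List.length_singleton]
            omega
          · intro k hk
            rw [lc.2.2 k hk]
            omega
        | pair b c =>
          have h := G.wf_pair i b c him hr
          have pc := pair_core G T IH2 hin hr h
          rw [emit_tight_pair hseeni hr h]
          dsimp only
          exact pc.1
        | pow b t => exact absurd hr (hnp b t)
    · -- tag = 2 (copy or fresh)
      cases hseeni : seen i with
      | some s =>
        rw [emit_copy_some hseeni]
        exact copy_case G T hin hseeni
      | none =>
        rw [emit_copy_none hseeni]
        have h : MOutGen G T i pos seen Q (emit G 0 i pos seen).1 (emit G 0 i pos seen).2
            0 0 := ih (N - 1) (by omega) 0 i pos seen Q (by omega) (by omega) hin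
          (fun _ => hseeni) (by simp)
        exact h.mono_slack (by norm_num) (by norm_num)

end MasterProof


/-- For an absolute constant `C`: if an RLSLP `G` generates `T` and its parse tree
has height `h`, then `T` has an `h`-bounded LZ-like encoding of size at most
`C` times the size of `G`. -/
theorem stmt9 :
    ∃ C : ℕ, 0 < C ∧
      ∀ (α : Type) (G : RLSLP α) (T : List α), G.Generates T →
        ∃ P : List (ℕ × ℕ), IsLZ T P ∧ HBounded T P G.parseHeight ∧
          P.length ≤ C * G.m := by
  refine ⟨3, by norm_num, ?_⟩
  intro α G T hGen
  have hm := G.m_pos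
  have hT : G.expand (G.m - 1) = T := hGen
  have hTlen : (G.expand (G.m - 1)).length = T.length := by rw [hT]
  have hin : MIn G T (G.m - 1) 0 (fun _ => none) [] := by
    refine ⟨by omega, ?_, ?_, ?_, good_nil T, by simp⟩
    · rw [hTlen, hT]
      exact sub_zero_full T
    · intro j s h
      exact absurd h (by simp)
    · intro j s h
      exact absurd h (by simp)
  have M := master G T (3 * (G.m - 1)) 0 (G.m - 1) 0 (fun _ => none) []
    (by omega) (by omega) hin (fun _ => rfl) (by simp)
  obtain ⟨a1, a2, a3, a4, a5, a6, a7, a8⟩ := M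
  rw [List.nil_append] at a2 a8
  set P := (emit G 0 (G.m - 1) 0 (fun _ => none)).1 with hP
  have hPhi0 : Phi G (fun _ => none) = 0 := by simp [Phi]
  refine ⟨P, ⟨a2.1, a1.trans hTlen, a2.2⟩, ⟨hfun P, isHeight_hfun a2, ?_⟩, ?_⟩
  · intro x hx
    have := a8 x (by omega)
    simpa [RLSLP.parseHeight] using this
  · have h1 := Phi_le G (emit G 0 (G.m - 1) 0 (fun _ => none)).2
    rw [hPhi0] at a7
    simp at a7
    omega
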